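/- Let n > 0 and let t ↦ (M(t), α(t), β(t)) solve the system dM/dt = M×ω + e₁×α + e₂×β, dα/dt = α×ω, dβ/dt = β×ω with ω = M I⁻¹, I = diag(n,n,1). If |α(0)| = |β(0)| = 1 and α(0)·β(0) = 0, then the function L = n(ω₁γ₁ + ω₂γ₂) + ω₃(γ₃ − 1), where γ = α×β, is constant in time. -/

import Mathlib

open Matrix Real

private lemma cross_comp0 (a b : Fin 3 → ℝ) : (a ⨯₃ b) 0 = a 1 * b 2 - a 2 * b 1 := by
  simp [cross_apply]

private lemma cross_comp1 (a b : Fin 3 → ℝ) : (a ⨯₃ b) 1 = a 2 * b 0 - a 0 * b 2 := by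
  simp [cross_apply]

private lemma cross_comp2 (a b : Fin 3 → ℝ) : (a ⨯₃ b) 2 = a 0 * b 1 - a 1 * b 0 := by
  simp [cross_apply]

private lemma dot_conserved (α β ω : ℝ → Fin 3 → ℝ)
    (hα : ∀ t, HasDerivAt α (α t ⨯₃ ω t) t)
    (hβ : ∀ t, HasDerivAt β (β t ⨯₃ ω t) t) :
    ∀ t₁ t₂ : ℝ,
      α t₁ 0 * β t₁ 0 + α t₁ 1 * β t₁ 1 + α t₁ 2 * β t₁ 2
        = α t₂ 0 * β t₂ 0 + α t₂ 1 * β t₂ 1 + α t₂ 2 * β t₂ 2 := by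
  have hA : ∀ (t : ℝ) (i : Fin 3), HasDerivAt (fun s => α s i) ((α t ⨯₃ ω t) i) t :=
    fun t i => hasDerivAt_pi.mp (hα t) i
  have hB : ∀ (t : ℝ) (i : Fin 3), HasDerivAt (fun s => β s i) ((β t ⨯₃ ω t) i) t :=
    fun t i => hasDerivAt_pi.mp (hβ t) i
  have key : ∀ t : ℝ, HasDerivAt
      (fun s => α s 0 * β s 0 + α s 1 * β s 1 + α s 2 * β s 2) 0 t := by
    intro t
    have h := (((hA t 0).mul (hB t 0)).add ((hA t 1).mul (hB t 1))).add
      ((hA t 2).mul (hB t 2))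
    refine h.congr_deriv (Eq.symm ?_)
    simp only [cross_comp0, cross_comp1, cross_comp2]
    ring
  intro t₁ t₂
  exact is_const_of_deriv_eq_zero (fun t => (key t).differentiableAt)
    (fun t => (key t).deriv) t₁ t₂

/-- For the dynamically symmetric top (`I = diag(n,n,1)`, `n > 0`)
with centers of application `e₁, e₂` and an orthonormal pair of fields
(`|α(0)| = |β(0)| = 1`, `α(0)·β(0) = 0`), the momentum integral
`L = n(ω₁γ₁ + ω₂γ₂) + ω₃(γ₃ − 1)`, where `γ = α×β`, is constant in time. -/
theorem momentum_integral_is_constant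
    (n : ℝ) (hn : 0 < n)
    (M α β : ℝ → Fin 3 → ℝ)
    (ω : ℝ → Fin 3 → ℝ)
    (hω : ∀ t, ω t = M t ᵥ* (Matrix.diagonal ![n, n, 1])⁻¹)
    (hM : ∀ t, HasDerivAt M
      (M t ⨯₃ ω t + (![1, 0, 0] : Fin 3 → ℝ) ⨯₃ α t + (![0, 1, 0] : Fin 3 → ℝ) ⨯₃ β t) t)
    (hα : ∀ t, HasDerivAt α (α t ⨯₃ ω t) t)
    (hβ : ∀ t, HasDerivAt β (β t ⨯₃ ω t) t)
    (hα0 : α 0 ⬝ᵥ α 0 = 1) (hβ0 : β 0 ⬝ᵥ β 0 = 1) (hαβ0 : α 0 ⬝ᵥ β 0 = 0)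
    (γ : ℝ → Fin 3 → ℝ) (hγ : ∀ t, γ t = α t ⨯₃ β t) :
    ∀ t₁ t₂ : ℝ,
      n * (ω t₁ 0 * γ t₁ 0 + ω t₁ 1 * γ t₁ 1) + ω t₁ 2 * (γ t₁ 2 - 1)
        = n * (ω t₂ 0 * γ t₂ 0 + ω t₂ 1 * γ t₂ 1) + ω t₂ 2 * (γ t₂ 2 - 1) := by
  have hn' : n ≠ 0 := hn.ne'
  -- inverse of the inertia tensor
  have hinv : (Matrix.diagonal ![n, n, 1])⁻¹ = Matrix.diagonal ![n⁻¹, n⁻¹, (1:ℝ)] := by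
    apply Matrix.inv_eq_right_inv
    ext i j
    fin_cases i <;> fin_cases j <;>
      simp [Matrix.mul_apply, Fin.sum_univ_three, Matrix.diagonal, Matrix.one_apply, hn']
  -- components of ω
  have hω0 : ∀ t, ω t 0 = M t 0 * n⁻¹ := by
    intro t; rw [hω, hinv]; simp [Matrix.vecMul_diagonal]
  have hω1 : ∀ t, ω t 1 = M t 1 * n⁻¹ := by
    intro t; rw [hω, hinv]; simp [Matrix.vecMul_diagonal]
  have hω2 : ∀ t, ω t 2 = M t 2 := by
    intro t; rw [hω, hinv]; simp [Matrix.vecMul_diagonal]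
  -- conserved dot products
  have haa : ∀ t, α t 0 * α t 0 + α t 1 * α t 1 + α t 2 * α t 2 = 1 := by
    intro t
    have h := dot_conserved α α ω hα hα t 0
    rw [h]
    simpa [dotProduct, Fin.sum_univ_three] using hα0
  have hbb : ∀ t, β t 0 * β t 0 + β t 1 * β t 1 + β t 2 * β t 2 = 1 := by
    intro t
    have h := dot_conserved β β ω hβ hβ t 0
    rw [h]
    simpa [dotProduct, Fin.sum_univ_three] using hβ0
  have hab : ∀ t, α t 0 * β t 0 + α t 1 * β t 1 + α t 2 * β t 2 = 0 := by
    intro t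
    have h := dot_conserved α β ω hα hβ t 0
    rw [h]
    simpa [dotProduct, Fin.sum_univ_three] using hαβ0
  -- component derivatives
  have hA : ∀ (t : ℝ) (i : Fin 3), HasDerivAt (fun s => α s i) ((α t ⨯₃ ω t) i) t :=
    fun t i => hasDerivAt_pi.mp (hα t) i
  have hB : ∀ (t : ℝ) (i : Fin 3), HasDerivAt (fun s => β s i) ((β t ⨯₃ ω t) i) t :=
    fun t i => hasDerivAt_pi.mp (hβ t) i
  have hMc : ∀ (t : ℝ) (i : Fin 3), HasDerivAt (fun s => M s i)
      ((M t ⨯₃ ω t + (![1, 0, 0] : Fin 3 → ℝ) ⨯₃ α t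
        + (![0, 1, 0] : Fin 3 → ℝ) ⨯₃ β t) i) t :=
    fun t i => hasDerivAt_pi.mp (hM t) i
  -- the quantity L rewritten in terms of M, α, β only
  set G : ℝ → ℝ := fun s =>
    M s 0 * (α s 1 * β s 2 - α s 2 * β s 1)
      + M s 1 * (α s 2 * β s 0 - α s 0 * β s 2)
      + M s 2 * (α s 0 * β s 1 - α s 1 * β s 0) - M s 2 with hG
  have hLG : ∀ t, n * (ω t 0 * γ t 0 + ω t 1 * γ t 1) + ω t 2 * (γ t 2 - 1) = G t := by
    intro t
    rw [hG]
    simp only [hγ, hω0, hω1, hω2, cross_comp0, cross_comp1, cross_comp2]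
    field_simp
    ring
  have key : ∀ t : ℝ, HasDerivAt G 0 t := by
    intro t
    have h := ((((hMc t 0).fun_mul (((hA t 1).fun_mul (hB t 2)).fun_sub ((hA t 2).fun_mul (hB t 1)))).fun_add
      ((hMc t 1).fun_mul (((hA t 2).fun_mul (hB t 0)).fun_sub ((hA t 0).fun_mul (hB t 2))))).fun_add
      ((hMc t 2).fun_mul (((hA t 0).fun_mul (hB t 1)).fun_sub ((hA t 1).fun_mul (hB t 0))))).fun_sub (hMc t 2)
    refine h.congr_deriv (Eq.symm ?_)
    simp only [Pi.add_apply, cross_comp0, cross_comp1, cross_comp2, hω0, hω1, hω2,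
      Matrix.cons_val_zero, Matrix.cons_val_one, Matrix.head_cons, Matrix.cons_val_two,
      Matrix.tail_cons]
    have h1 := haa t
    have h2 := hbb t
    have h3 := hab t
    field_simp
    linear_combination (-(n * (α t 0 - β t 1))) * h3 + (n * β t 0) * h1 - (n * α t 1) * h2
  intro t₁ t₂
  rw [hLG t₁, hLG t₂]
  exact is_const_of_deriv_eq_zero (fun t => (key t).differentiableAt)
    (fun t => (key t).deriv) t₁ t₂
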